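/- Let I be a linearly ordered type and C a commutative ring containing ℚ. Let J be the ideal of MvPolynomial C P generated by the set {r(V1,V2,V3) | V1, V2, V3 nonempty words over I with V1 <dlex V3}, and let Sgood := {(V,W) ∈ P | V is a Lyndon word, and there do not exist nonempty words W1, W2 with W1 <dlex V such that W is the lexicographically greatest element of sh(W1,W2)}. Then every polynomial f ∈ MvPolynomial C P can be written as f = g + h where g belongs to the C-subalgebra Algebra.adjoin C {X p | p ∈ Sgood} and h ∈ J. Equivalently, the quotient C-algebra MvPolynomial C P ⧸ J is generated as a C-algebra by the images of the variables X p with p ∈ Sgood. (This is the case of the corollary on generators of the ring of constants C2 where the module of non-integrable elements is a free C-module with basis indexed by I, so that the symmetric algebra Sym(ε(M2)) is the polynomial ring MvPolynomial C P.) -/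

import Mathlib

open scoped Classical

/-- Degree-lexicographic strict order on words over a linearly ordered alphabet:
first compare lengths, then compare lexicographically. -/
def DlexLt {I : Type*} [LinearOrder I] (V W : List I) : Prop :=
  V.length < W.length ∨ (V.length = W.length ∧ V < W)

/-- Degree-lexicographic (non-strict) order on words. -/
def DlexLe {I : Type*} [LinearOrder I] (V W : List I) : Prop :=
  DlexLt V W ∨ V = W

theorem dlexLe_total {I : Type*} [LinearOrder I] (V W : List I) :
    DlexLe V W ∨ DlexLe W V := by
  rcases lt_trichotomy V.length W.length with h | h | h
  · exact Or.inl (Or.inl (Or.inl h))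
  · rcases lt_trichotomy V W with h' | h' | h'
    · exact Or.inl (Or.inl (Or.inr ⟨h, h'⟩))
    · exact Or.inl (Or.inr h')
    · exact Or.inr (Or.inl (Or.inr ⟨h.symm, h'⟩))
  · exact Or.inr (Or.inl (Or.inl h))

/-- The type `P` of pairs `(V, W)` of nonempty words with `V ≤dlex W`. -/
abbrev WordPair (I : Type*) [LinearOrder I] : Type _ :=
  {p : List I × List I // p.1 ≠ [] ∧ p.2 ≠ [] ∧ DlexLe p.1 p.2}

/-- `χ(A, B)`: the pair `(A, B)` normalized so that the first component is
`≤dlex` the second one. -/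
noncomputable def chi {I : Type*} [LinearOrder I] (A B : List I)
    (hA : A ≠ []) (hB : B ≠ []) : WordPair I :=
  if h : DlexLe A B then ⟨(A, B), hA, hB, h⟩
  else ⟨(B, A), hB, hA, (dlexLe_total A B).resolve_left h⟩

/-- The strict order `≺` on `WordPair I`, comparing `(V, W)` by the triple
`(V.length + W.length, V, W)` lexicographically (words compared by `dlex`). -/
def PairLt {I : Type*} [LinearOrder I] (p q : WordPair I) : Prop :=
  p.val.1.length + p.val.2.length < q.val.1.length + q.val.2.length ∨
  (p.val.1.length + p.val.2.length = q.val.1.length + q.val.2.length ∧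
    (DlexLt p.val.1 q.val.1 ∨ (p.val.1 = q.val.1 ∧ DlexLt p.val.2 q.val.2)))

/-- The order `≼` on `WordPair I`. -/
def PairLe {I : Type*} [LinearOrder I] (p q : WordPair I) : Prop :=
  PairLt p q ∨ p = q

/-- The multiset of shuffles of two words. -/
def shuffles {I : Type*} : List I → List I → Multiset (List I)
  | [], w => {w}
  | x :: v, [] => {x :: v}
  | x :: v, y :: w =>
      ((shuffles v (y :: w)).map (x :: ·)) + ((shuffles (x :: v) w).map (y :: ·))
  termination_by v w => v.length + w.length

/-- The variable `X (χ(A, B))` of the polynomial ring `MvPolynomial (WordPair I) C`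
(`0` in the degenerate case of an empty word, which never occurs below). -/
noncomputable def Xchi {I : Type*} [LinearOrder I] (C : Type*) [CommRing C]
    (A B : List I) : MvPolynomial (WordPair I) C :=
  if h : A ≠ [] ∧ B ≠ [] then MvPolynomial.X (chi A B h.1 h.2) else 0

/-- `Σ_{U ∈ sh(A,B)} X(χ(U, W))`, with multiplicity. -/
noncomputable def shSumR {I : Type*} [LinearOrder I] (C : Type*) [CommRing C]
    (A B W : List I) : MvPolynomial (WordPair I) C :=
  ((shuffles A B).map fun U => Xchi C U W).sum

/-- `Σ_{U ∈ sh(A,B)} X(χ(V, U))`, with multiplicity. -/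
noncomputable def shSumL {I : Type*} [LinearOrder I] (C : Type*) [CommRing C]
    (V A B : List I) : MvPolynomial (WordPair I) C :=
  ((shuffles A B).map fun U => Xchi C V U).sum

/-- The defining relation `r(V1, V2, V3)` of the ring of constants `C₂` of the free
integro-differential ring, as a polynomial in `MvPolynomial (WordPair I) C`. -/
noncomputable def rPoly {I : Type*} [LinearOrder I] (C : Type*) [CommRing C]
    (V1 V2 V3 : List I) : MvPolynomial (WordPair I) C :=
  shSumR C V1 V2 V3 - shSumL C V1 V2 V3
  + ∑ j ∈ Finset.range V2.length,
      ((∑ i ∈ Finset.Ico (1 - j) V1.length,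
          Xchi C (V1.drop i) (V2.drop j) * shSumR C (V1.take i) (V2.take j) V3)
        - ∑ k ∈ Finset.Ico (1 - j) V3.length,
          shSumL C V1 (V2.take j) (V3.take k) * Xchi C (V2.drop j) (V3.drop k))

/-- A word is a Lyndon word iff it is nonempty and lexicographically smaller than each of
its proper nonempty suffixes. -/
def IsLyndonWord {I : Type*} [LinearOrder I] (V : List I) : Prop :=
  V ≠ [] ∧ ∀ A U : List I, A ≠ [] → U ≠ [] → V = A ++ U → V < U

section ListLexAux

variable {I : Type*} [LinearOrder I]

theorem list_lt_iff {l l' : List I} : l < l' ↔ List.Lex (· < ·) l l' := Iff.rfl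

theorem cons_lt_cons_iff' {a : I} {u v : List I} : a :: u < a :: v ↔ u < v := by
  rw [list_lt_iff, list_lt_iff]; simp [List.cons_lex_cons_iff]

theorem cons_le_cons_iff' {a : I} {u v : List I} : a :: u ≤ a :: v ↔ u ≤ v := by
  constructor
  · intro h
    by_contra h'
    exact absurd (cons_lt_cons_iff'.mpr (lt_of_not_ge h') : a :: v < a :: u) (not_lt_of_ge h)
  · exact List.cons_le_cons a

theorem cons_lt_cons_of_lt {a b : I} (h : a < b) (u v : List I) : a :: u < b :: v :=
  list_lt_iff.mpr (List.Lex.rel h)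

theorem le_cons_cons_iff {a b : I} {u v : List I} :
    a :: u ≤ b :: v ↔ a < b ∨ (a = b ∧ u ≤ v) := by
  constructor
  · intro h
    rcases lt_or_eq_of_le h with h | h
    · rcases list_lt_iff.mp h with _ | h | h
      · exact Or.inl h
      · exact Or.inr ⟨rfl, le_of_lt (list_lt_iff.mpr h)⟩
    · obtain ⟨rfl, rfl⟩ : a = b ∧ u = v := by
        constructor <;> injection h
      exact Or.inr ⟨rfl, le_rfl⟩
  · rintro (h | ⟨rfl, h⟩)
    · exact le_of_lt (cons_lt_cons_of_lt h u v)
    · exact cons_le_cons_iff'.mpr h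

theorem le_append_self (l t : List I) : l ≤ l ++ t := by
  induction l with
  | nil => exact not_lt.mp fun h => nomatch list_lt_iff.mp h
  | cons a l ih => exact cons_le_cons_iff'.mpr ih

theorem append_le_append_iff_le (P u v : List I) : P ++ u ≤ P ++ v ↔ u ≤ v := by
  induction P with
  | nil => rfl
  | cons a P ih => simpa [cons_le_cons_iff'] using ih

theorem strict_prefix_lt {l t : List I} (ht : t ≠ []) : l < l ++ t := by
  refine lt_of_le_of_ne (le_append_self l t) ?_
  intro h
  have h2 := congrArg List.length h
  simp at h2
  exact ht h2

/-- If `D < U` and `U ≤ D ++ X` then `D` is a strict prefix of `U`. -/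
theorem exists_append_of_lt_of_le :
    ∀ (D U X : List I), D < U → U ≤ D ++ X → ∃ w, w ≠ [] ∧ U = D ++ w := by
  intro D
  induction D with
  | nil =>
    intro U X hlt _
    refine ⟨U, ?_, rfl⟩
    rintro rfl
    exact absurd hlt (lt_irrefl _)
  | cons d D' ih =>
    intro U X hlt hle
    cases U with
    | nil => exact absurd hlt (by simp [list_lt_iff])
    | cons u U' =>
      rcases list_lt_iff.mp hlt with _ | h | h
      · -- head lt : d < u, contradiction with hle
        rw [List.cons_append] at hle
        rcases le_cons_cons_iff.mp hle with h' | ⟨rfl, _⟩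
        · exact absurd (h.trans h') (lt_irrefl _)
        · exact absurd h (lt_irrefl _)
      · -- heads equal (Lex.cons), u = d
        obtain ⟨w, hw, hUw⟩ := ih U' X (list_lt_iff.mpr h)
          (by rw [List.cons_append, cons_le_cons_iff'] at hle; exact hle)
        exact ⟨w, hw, by rw [hUw, List.cons_append]⟩

end ListLexAux

section DlexAux

variable {I : Type*} [LinearOrder I]

theorem dlexLt_irrefl (V : List I) : ¬ DlexLt V V := by
  rintro (h | ⟨-, h⟩)
  · exact lt_irrefl _ h
  · exact lt_irrefl _ h

theorem dlexLt_trans {U V W : List I} (h1 : DlexLt U V) (h2 : DlexLt V W) : DlexLt U W := by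
  rcases h1 with h1 | ⟨e1, l1⟩ <;> rcases h2 with h2 | ⟨e2, l2⟩
  · exact Or.inl (h1.trans h2)
  · exact Or.inl (e2 ▸ h1)
  · exact Or.inl (e1 ▸ h2)
  · exact Or.inr ⟨e1.trans e2, l1.trans l2⟩

theorem dlexLe_refl (V : List I) : DlexLe V V := Or.inr rfl

theorem dlexLt_of_dlexLe_of_dlexLt {U V W : List I} (h1 : DlexLe U V) (h2 : DlexLt V W) :
    DlexLt U W := by
  rcases h1 with h1 | rfl
  · exact dlexLt_trans h1 h2
  · exact h2

theorem dlexLt_of_dlexLt_of_dlexLe {U V W : List I} (h1 : DlexLt U V) (h2 : DlexLe V W) :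
    DlexLt U W := by
  rcases h2 with h2 | rfl
  · exact dlexLt_trans h1 h2
  · exact h1

theorem dlexLe_trans {U V W : List I} (h1 : DlexLe U V) (h2 : DlexLe V W) : DlexLe U W := by
  rcases h1 with h1 | rfl
  · exact Or.inl (dlexLt_of_dlexLt_of_dlexLe h1 h2)
  · exact h2

theorem dlexLt_asymm {U V : List I} (h1 : DlexLt U V) : ¬ DlexLt V U := fun h2 =>
  dlexLt_irrefl U (dlexLt_trans h1 h2)

theorem dlexLe_antisymm {U V : List I} (h1 : DlexLe U V) (h2 : DlexLe V U) : U = V := by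
  rcases h1 with h1 | rfl
  · rcases h2 with h2 | rfl
    · exact absurd h1 (dlexLt_asymm h2)
    · rfl
  · rfl

theorem dlexLt_of_not_dlexLe {U V : List I} (h : ¬ DlexLe U V) : DlexLt V U :=
  ((dlexLe_total U V).resolve_left h).resolve_right (fun e => h (e ▸ dlexLe_refl V))

theorem not_dlexLt_of_dlexLe {U V : List I} (h : DlexLe U V) : ¬ DlexLt V U := by
  rcases h with h | rfl
  · exact dlexLt_asymm h
  · exact dlexLt_irrefl _

theorem dlexLe_length {U V : List I} (h : DlexLe U V) : U.length ≤ V.length := by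
  rcases h with (h | ⟨e, -⟩) | rfl
  · exact le_of_lt h
  · exact le_of_eq e
  · exact le_rfl

theorem dlexLt_of_length_lt {U V : List I} (h : U.length < V.length) : DlexLt U V := Or.inl h

theorem dlexLt_of_length_eq_of_lt {U V : List I} (he : U.length = V.length) (h : U < V) :
    DlexLt U V := Or.inr ⟨he, h⟩

theorem dlexLt_length_le {U V : List I} (h : DlexLt U V) : U.length ≤ V.length := by
  rcases h with h | ⟨e, -⟩
  · exact le_of_lt h
  · exact le_of_eq e

end DlexAux

set_option linter.unusedSectionVars false

section ShufflesAux

variable {I : Type*} [LinearOrder I]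

theorem shuffles_nil_left (w : List I) : shuffles [] w = {w} := by
  rw [shuffles]

theorem shuffles_nil_right (v : List I) : shuffles v [] = {v} := by
  cases v with
  | nil => rw [shuffles]
  | cons x v => rw [shuffles]

theorem shuffles_cons_cons (x y : I) (v w : List I) :
    shuffles (x :: v) (y :: w) =
      ((shuffles v (y :: w)).map (x :: ·)) + ((shuffles (x :: v) w).map (y :: ·)) := by
  rw [shuffles]

theorem perm_of_mem_shuffles :
    ∀ (v w S : List I), S ∈ shuffles v w → S.Perm (v ++ w) := by
  have main : ∀ (n : ℕ) (v w S : List I), v.length + w.length ≤ n →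
      S ∈ shuffles v w → S.Perm (v ++ w) := by
    intro n
    induction n with
    | zero =>
      intro v w S hn hS
      obtain ⟨rfl, rfl⟩ : v = [] ∧ w = [] := by
        constructor <;> [skip; skip] <;>
        · apply List.length_eq_zero_iff.mp; omega
      rw [shuffles_nil_left] at hS
      simp at hS; simp [hS]
    | succ n ih =>
      intro v w S hn hS
      cases v with
      | nil =>
        rw [shuffles_nil_left] at hS
        simp at hS; simp [hS]
      | cons x v' =>
        cases w with
        | nil =>
          rw [shuffles_nil_right] at hS
          simp at hS; simp [hS]
        | cons y w' =>
          rw [shuffles_cons_cons] at hS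
          rcases Multiset.mem_add.mp hS with hS | hS <;>
            obtain ⟨T, hT, rfl⟩ := Multiset.mem_map.mp hS
          · have := ih v' (y :: w') T (by simp at hn ⊢; omega) hT
            simpa using this.cons x
          · have h2 := ih (x :: v') w' T (by simp at hn ⊢; omega) hT
            have h3 := h2.cons y
            refine h3.trans ?_
            exact List.perm_middle.symm
  intro v w S hS
  exact main (v.length + w.length) v w S le_rfl hS

theorem length_of_mem_shuffles {v w S : List I} (h : S ∈ shuffles v w) :
    S.length = v.length + w.length := by
  have := (perm_of_mem_shuffles v w S h).length_eq
  simpa using this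

theorem mem_of_mem_shuffles {v w S : List I} (h : S ∈ shuffles v w) {a : I} (ha : a ∈ S) :
    a ∈ v ∨ a ∈ w := by
  have := (perm_of_mem_shuffles v w S h).mem_iff.mp ha
  simpa using this

theorem ne_nil_of_mem_shuffles {v w S : List I} (h : S ∈ shuffles v w) (hv : v ≠ []) :
    S ≠ [] := by
  intro hS
  have := length_of_mem_shuffles h
  rw [hS] at this
  simp at this
  exact hv (List.length_eq_zero_iff.mp (by omega))

theorem ne_nil_of_mem_shuffles' {v w S : List I} (h : S ∈ shuffles v w) (hw : w ≠ []) :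
    S ≠ [] := by
  intro hS
  have := length_of_mem_shuffles h
  rw [hS] at this
  simp at this
  exact hw (List.length_eq_zero_iff.mp (by omega))

theorem append_mem_shuffles : ∀ (v w : List I), v ++ w ∈ shuffles v w := by
  intro v
  induction v with
  | nil => intro w; rw [shuffles_nil_left]; simp
  | cons x v' ih =>
    intro w
    cases w with
    | nil => rw [shuffles_nil_right]; simp
    | cons y w' =>
      rw [shuffles_cons_cons]
      refine Multiset.mem_add.mpr (Or.inl ?_)
      exact Multiset.mem_map.mpr ⟨v' ++ y :: w', ih _, rfl⟩

theorem append_mem_shuffles' : ∀ (w v : List I), w ++ v ∈ shuffles v w := by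
  intro w
  induction w with
  | nil => intro v; rw [shuffles_nil_right]; simp
  | cons y w' ih =>
    intro v
    cases v with
    | nil => rw [shuffles_nil_left]; simp
    | cons x v' =>
      rw [shuffles_cons_cons]
      refine Multiset.mem_add.mpr (Or.inr ?_)
      exact Multiset.mem_map.mpr ⟨w' ++ x :: v', ih _, rfl⟩

theorem mem_shuffles_cons_cons {x y : I} {v w S : List I} :
    S ∈ shuffles (x :: v) (y :: w) ↔
      (∃ T ∈ shuffles v (y :: w), S = x :: T) ∨ (∃ T ∈ shuffles (x :: v) w, S = y :: T) := by
  rw [shuffles_cons_cons]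
  simp only [Multiset.mem_add, Multiset.mem_map]
  constructor
  · rintro (⟨T, hT, rfl⟩ | ⟨T, hT, rfl⟩)
    · exact Or.inl ⟨T, hT, rfl⟩
    · exact Or.inr ⟨T, hT, rfl⟩
  · rintro (⟨T, hT, rfl⟩ | ⟨T, hT, rfl⟩)
    · exact Or.inl ⟨T, hT, rfl⟩
    · exact Or.inr ⟨T, hT, rfl⟩

end ShufflesAux

section MaxShuffle

variable {I : Type*} [LinearOrder I]

/-- Key exchange lemma: if `take k x = take k y` and `y ≤ x`, then every shuffle of
`x` with `drop k y` is dominated by some shuffle of `drop k x` with `y`. -/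
theorem swapk : ∀ (n : ℕ) (x y : List I) (k : ℕ),
    2 * (x.length + y.length) - k ≤ n → k ≤ y.length → x.take k = y.take k → y ≤ x →
    ∀ S ∈ shuffles x (y.drop k), ∃ T ∈ shuffles (x.drop k) y, S ≤ T := by
  intro n
  induction n with
  | zero =>
    intro x y k hn hk htake hyx S hS
    have hk0 : k = 0 := by
      rcases Nat.eq_zero_or_pos k with h | h
      · exact h
      · omega
    subst hk0
    exact ⟨S, by simpa using hS, le_rfl⟩
  | succ n ih =>
    intro x y k hn hk htake hyx S hS
    rcases Nat.eq_zero_or_pos k with rfl | hkpos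
    · exact ⟨S, by simpa using hS, le_rfl⟩
    obtain ⟨k', rfl⟩ : ∃ k', k = k' + 1 := ⟨k - 1, by omega⟩
    cases y with
    | nil => simp at hk
    | cons a y' =>
      cases x with
      | nil =>
        exfalso
        have h1 : ([] : List I) = (a :: y').take (k' + 1) := htake
        rw [List.take_succ_cons] at h1
        exact List.cons_ne_nil _ _ h1.symm
      | cons b x' =>
        have hk'len : k' ≤ y'.length := by simpa using hk
        have htake' : x'.take k' = y'.take k' := by
          rw [List.take_succ_cons, List.take_succ_cons] at htake
          exact (List.cons.injEq _ _ _ _ ▸ htake :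
            b = a ∧ x'.take k' = y'.take k').2
        have hba : b = a := by
          rw [List.take_succ_cons, List.take_succ_cons] at htake
          exact (List.cons.injEq _ _ _ _ ▸ htake : b = a ∧ x'.take k' = y'.take k').1
        subst hba
        have hyx' : y' ≤ x' := cons_le_cons_iff'.mp hyx
        have hdk : (b :: y').drop (k' + 1) = y'.drop k' := by simp
        have hdx : (b :: x').drop (k' + 1) = x'.drop k' := by simp
        rw [hdk] at hS
        cases hy2 : y'.drop k' with
        | nil =>
          -- k = length y
          have hklen : k' = y'.length := by
            have := List.drop_eq_nil_iff.mp hy2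
            omega
          rw [hy2, shuffles_nil_right] at hS
          have hSx : S = b :: x' := by simpa using hS
          refine ⟨(b :: y') ++ (b :: x').drop (k' + 1), append_mem_shuffles' _ _, ?_⟩
          have hxeq : b :: x' = (b :: y') ++ (b :: x').drop (k' + 1) := by
            conv_lhs => rw [← List.take_append_drop (k' + 1) (b :: x')]
            congr 1
            rw [htake]
            rw [List.take_succ_cons]
            congr 1
            exact List.take_of_length_le (by omega)
          rw [hSx]
          exact le_of_eq hxeq
        | cons e y₃ =>
          have hklt : k' < y'.length := by
            by_contra h
            rw [List.drop_eq_nil_iff.mpr (by omega)] at hy2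
            exact List.cons_ne_nil _ _ hy2.symm
          cases hx2 : x'.drop k' with
          | nil =>
            exfalso
            have hxlen : x'.length ≤ k' := List.drop_eq_nil_iff.mp hx2
            have hxky : (b :: x') = (b :: y').take (k' + 1) := by
              conv_lhs => rw [← List.take_of_length_le
                (show (b :: x').length ≤ k' + 1 by simp; omega), htake]
            have hlt : (b :: y').take (k' + 1) < b :: y' := by
              conv_rhs => rw [← List.take_append_drop (k' + 1) (b :: y')]
              apply strict_prefix_lt
              rw [List.drop_succ_cons, hy2]
              exact List.cons_ne_nil _ _
            rw [← hxky] at hlt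
            exact absurd (lt_of_le_of_lt hyx hlt) (lt_irrefl _)
          | cons d x₃ =>
            -- e ≤ d
            have hdrople : y'.drop k' ≤ x'.drop k' := by
              have h1 : (b :: y') ≤ (b :: x') := hyx
              have h2 := h1
              conv at h2 =>
                rw [← List.take_append_drop (k' + 1) (b :: y'),
                    ← List.take_append_drop (k' + 1) (b :: x'), htake]
              rw [append_le_append_iff_le] at h2
              rw [hdk, hdx] at h2
              exact h2
            have hed : e ≤ d := by
              rw [hy2, hx2] at hdrople
              rcases le_cons_cons_iff.mp hdrople with h | ⟨h, -⟩
              · exact le_of_lt h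
              · exact le_of_eq h
            rw [hy2] at hS
            rcases mem_shuffles_cons_cons.mp hS with ⟨T₀, hT₀, rfl⟩ | ⟨T₀, hT₀, rfl⟩
            · -- S = b :: T₀, T₀ ∈ shuffles x' (e :: y₃) = shuffles x' (y'.drop k')
              rw [← hy2] at hT₀
              obtain ⟨T₁, hT₁, hle₁⟩ := ih x' y' k'
                (by simp at hn ⊢; omega) hk'len htake' hyx' T₀ hT₀
              refine ⟨b :: T₁, ?_, ?_⟩
              · rw [hdx, hx2]
                rw [hx2] at hT₁
                exact mem_shuffles_cons_cons.mpr (Or.inr ⟨T₁, hT₁, rfl⟩)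
              · exact cons_le_cons_iff'.mpr hle₁
            · -- S = e :: T₀, T₀ ∈ shuffles (b :: x') y₃
              rcases lt_or_eq_of_le hed with hlt | rfl
              · refine ⟨d :: (x₃ ++ (b :: y')), ?_, ?_⟩
                · rw [hdx, hx2]
                  exact mem_shuffles_cons_cons.mpr
                    (Or.inl ⟨x₃ ++ (b :: y'), append_mem_shuffles _ _, rfl⟩)
                · exact le_of_lt (cons_lt_cons_of_lt hlt _ _)
              · -- e = d
                have htk1 : (b :: x').take (k' + 1 + 1) = (b :: y').take (k' + 1 + 1) := by
                  rw [List.take_add (i := k' + 1) (j := 1), List.take_add (i := k' + 1) (j := 1), htake,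
                    hdk, hdx, hy2, hx2]
                  simp
                have hdk1 : (b :: y').drop (k' + 1 + 1) = y₃ := by
                  rw [← List.drop_drop, hdk, hy2]
                  simp
                have hdx1 : (b :: x').drop (k' + 1 + 1) = x₃ := by
                  rw [← List.drop_drop, hdx, hx2]
                  simp
                obtain ⟨T₁, hT₁, hle₁⟩ := ih (b :: x') (b :: y') (k' + 1 + 1)
                  (by simp at hn ⊢; omega) (by simp; omega) htk1 hyx T₀
                  (by rw [hdk1]; exact hT₀)
                rw [hdx1] at hT₁
                refine ⟨e :: T₁, ?_, ?_⟩
                · rw [hdx, hx2]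
                  exact mem_shuffles_cons_cons.mpr (Or.inl ⟨T₁, hT₁, rfl⟩)
                · exact cons_le_cons_iff'.mpr hle₁

end MaxShuffle

section MaxShuffle2

variable {I : Type*} [LinearOrder I]

/-- If `y ≤ drop i x` for all `i < |x|`, then every shuffle of `x` and `y` is `≤ x ++ y`. -/
theorem shuffle_bound : ∀ (x y : List I), (∀ i < x.length, y ≤ x.drop i) →
    ∀ S ∈ shuffles x y, S ≤ x ++ y := by
  intro x
  induction x with
  | nil =>
    intro y _ S hS
    rw [shuffles_nil_left] at hS
    simp at hS
    simp [hS]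
  | cons a x' ih =>
    intro y h1 S hS
    cases y with
    | nil =>
      rw [shuffles_nil_right] at hS
      simp at hS
      simp [hS]
    | cons b y' =>
      have hyx : (b :: y') ≤ (a :: x') := by
        have := h1 0 (by simp)
        simpa using this
      rcases mem_shuffles_cons_cons.mp hS with ⟨T, hT, rfl⟩ | ⟨T, hT, rfl⟩
      · -- S = a :: T, T ∈ shuffles x' (b :: y')
        have hT' : T ≤ x' ++ (b :: y') := by
          refine ih (b :: y') ?_ T hT
          intro i hi
          have := h1 (i + 1) (by simp; omega)
          simpa using this
        rw [List.cons_append]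
        exact cons_le_cons_iff'.mpr hT'
      · -- S = b :: T, T ∈ shuffles (a :: x') y'
        rcases le_cons_cons_iff.mp hyx with hba | ⟨rfl, -⟩
        · rw [List.cons_append]
          exact le_of_lt (cons_lt_cons_of_lt hba _ _)
        · -- b = a : use swapk with k = 1
          obtain ⟨T₁, hT₁, hle₁⟩ := swapk (2 * ((b :: x').length + (b :: y').length))
            (b :: x') (b :: y') 1 (by omega) (by simp) (by simp) hyx T (by simpa using hT)
          simp only [List.drop_succ_cons, List.drop_zero] at hT₁
          have hT₁' : T₁ ≤ x' ++ (b :: y') := by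
            refine ih (b :: y') ?_ T₁ hT₁
            intro i hi
            have := h1 (i + 1) (by simp; omega)
            simpa using this
          rw [List.cons_append]
          exact cons_le_cons_iff'.mpr (hle₁.trans hT₁')

/-- Every nonempty word that is not a Lyndon word is the lexicographically greatest
shuffle of two nonempty words whose concatenation it is. -/
theorem exists_max_shuffle_decomp (V : List I) (hV : V ≠ []) (hnl : ¬ IsLyndonWord V) :
    ∃ A U : List I, A ≠ [] ∧ U ≠ [] ∧ V = A ++ U ∧ ∀ S ∈ shuffles A U, S ≤ V := by
  classical
  rw [IsLyndonWord] at hnl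
  push_neg at hnl
  obtain ⟨A0, U0, hA0, hU0, hVeq, hU0V⟩ := hnl hV
  have hlenV : 2 ≤ V.length := by
    rw [hVeq, List.length_append]
    rcases List.exists_cons_of_ne_nil hA0 with ⟨c, A0', rfl⟩
    rcases List.exists_cons_of_ne_nil hU0 with ⟨c', U0', rfl⟩
    simp
    omega
  have hFne : ((Finset.Ico 1 V.length).image (fun i => V.drop i)).Nonempty :=
    ⟨V.drop 1, Finset.mem_image.mpr ⟨1, Finset.mem_Ico.mpr ⟨le_rfl, by omega⟩, rfl⟩⟩
  obtain ⟨i0, hi0, hUi0⟩ :=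
    Finset.mem_image.mp (Finset.min'_mem _ hFne)
  rw [Finset.mem_Ico] at hi0
  obtain ⟨hi01, hi02⟩ := hi0
  have hmin : ∀ i, 1 ≤ i → i < V.length →
      ((Finset.Ico 1 V.length).image (fun i => V.drop i)).min' hFne ≤ V.drop i := fun i h1 h2 =>
    Finset.min'_le _ _ (Finset.mem_image.mpr ⟨i, Finset.mem_Ico.mpr ⟨h1, h2⟩, rfl⟩)
  generalize hUgen : ((Finset.Ico 1 V.length).image (fun i => V.drop i)).min' hFne = U
    at hUi0 hmin
  set A : List I := V.take i0 with hA
  have hAU : V = A ++ U := by rw [hA, ← hUi0]; exact (List.take_append_drop i0 V).symm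
  have hUne : U ≠ [] := by
    rw [← hUi0]
    intro h
    have := List.drop_eq_nil_iff.mp h
    omega
  have hUlen : 0 < U.length := List.length_pos_iff.mpr hUne
  have hlenA : A.length = i0 := by
    rw [hA]
    simp
    omega
  have hAne : A ≠ [] := by
    intro h
    have := congrArg List.length h
    rw [hlenA] at this
    simp at this
    omega
  -- U ≤ V
  have hP2 : U ≤ V := by
    have hU0drop : U0 = V.drop A0.length := by
      rw [hVeq]; simp
    have h1 : U ≤ U0 := by
      rw [hU0drop]
      refine hmin A0.length ?_ ?_
      · rcases List.exists_cons_of_ne_nil hA0 with ⟨c, A0', rfl⟩; simp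
      · rw [hVeq, List.length_append]
        rcases List.exists_cons_of_ne_nil hU0 with ⟨c', U0', rfl⟩
        simp
    exact h1.trans hU0V
  -- gamma : U ≤ drop i A for all i < |A|
  have hgamma : ∀ i < A.length, U ≤ A.drop i := by
    intro i hi
    by_contra hcon
    have hDU : A.drop i < U := lt_of_not_ge hcon
    have hDlen : 0 < (A.drop i).length := by
      rw [List.length_drop]
      omega
    have hDne : A.drop i ≠ [] := by
      intro h
      rw [h] at hDlen
      simp at hDlen
    -- U ≤ drop i A ++ U  (= drop i V)
    have hdropV : V.drop i = A.drop i ++ U := by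
      rw [hAU, List.drop_append_of_le_length (by omega)]
    have hUle : U ≤ A.drop i ++ U := by
      rcases Nat.eq_zero_or_pos i with rfl | hipos
      · rw [List.drop_zero, ← hAU]
        exact hP2
      · have hilt : i < V.length := by
          rw [hAU, List.length_append]
          omega
        rw [← hdropV]
        exact hmin i hipos hilt
    obtain ⟨w, hwne, hUw⟩ := exists_append_of_lt_of_le (A.drop i) U U hDU hUle
    have hwlen : w.length < U.length := by
      have h1 := congrArg List.length hUw
      rw [List.length_append] at h1
      omega
    have hUlew : U ≤ w := by
      have hwdrop : V.drop (i0 + (A.drop i).length) = w := by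
        rw [← List.drop_drop, hUi0, hUw, List.drop_left]
      have hjlt : i0 + (A.drop i).length < V.length := by
        have h1 : V.length = i0 + U.length := by
          rw [hAU, List.length_append, hlenA]
        have h2 := congrArg List.length hUw
        rw [List.length_append] at h2
        have h3 : 0 < w.length := List.length_pos_iff.mpr hwne
        omega
      have := hmin (i0 + (A.drop i).length) (by omega) hjlt
      rwa [hwdrop] at this
    have hwleU : w ≤ U := by
      have h2 : A.drop i ++ w ≤ A.drop i ++ U := by
        rw [← hUw]; exact hUle
      exact (append_le_append_iff_le _ _ _).mp h2
    have : w = U := le_antisymm hwleU hUlew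
    rw [this] at hwlen
    omega
  refine ⟨A, U, hAne, hUne, hAU, ?_⟩
  rw [hAU]
  exact shuffle_bound A U hgamma

end MaxShuffle2

section PairAux

variable {I : Type*} [LinearOrder I]

theorem chi_val_cases (A B : List I) (hA : A ≠ []) (hB : B ≠ []) :
    (chi A B hA hB).val = (A, B) ∨ (chi A B hA hB).val = (B, A) := by
  rw [chi]
  split
  · exact Or.inl rfl
  · exact Or.inr rfl

theorem chi_total (A B : List I) (hA : A ≠ []) (hB : B ≠ []) :
    (chi A B hA hB).val.1.length + (chi A B hA hB).val.2.length = A.length + B.length := by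
  rcases chi_val_cases A B hA hB with h | h <;> rw [h] <;> simp [add_comm]

theorem chi_eq_of_dlexLe {A B : List I} (hA : A ≠ []) (hB : B ≠ []) (h : DlexLe A B) :
    (chi A B hA hB).val = (A, B) := by
  rw [chi, dif_pos h]

theorem chi_eq_of_dlexLe' {A B : List I} (hA : A ≠ []) (hB : B ≠ []) (h : DlexLe B A) :
    (chi A B hA hB).val = (B, A) := by
  rw [chi]
  split
  · next h' =>
      have hab : A = B := dlexLe_antisymm h' h
      subst hab
      rfl
  · rfl

theorem chi_fst_dlexLe (A B : List I) (hA : A ≠ []) (hB : B ≠ []) :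
    DlexLe (chi A B hA hB).val.1 A := by
  rw [chi]
  split
  · exact dlexLe_refl A
  · next h => exact Or.inl (dlexLt_of_not_dlexLe h)

theorem pairLt_of_total_lt {p q : WordPair I}
    (h : p.val.1.length + p.val.2.length < q.val.1.length + q.val.2.length) : PairLt p q :=
  Or.inl h

/-- If `DlexLt A q.1` then any `chi A U` (with matching total length) is `≺ q`. -/
theorem pairLt_chi_left {A U : List I} (hA : A ≠ []) (hU : U ≠ []) (q : WordPair I)
    (htot : A.length + U.length = q.val.1.length + q.val.2.length)
    (h1 : DlexLt A q.val.1) : PairLt (chi A U hA hU) q := by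
  refine Or.inr ⟨by rw [chi_total]; exact htot, Or.inl ?_⟩
  exact dlexLt_of_dlexLe_of_dlexLt (chi_fst_dlexLe A U hA hU) h1

/-- If `U < M` (lex) with equal lengths, then `chi U D ≺ chi M D`. -/
theorem pairLt_chi_right {U M D : List I} (hU : U ≠ []) (hM : M ≠ []) (hD : D ≠ [])
    (hlen : U.length = M.length) (hUM : U < M) :
    PairLt (chi U D hU hD) (chi M D hM hD) := by
  have hUMd : DlexLt U M := dlexLt_of_length_eq_of_lt hlen hUM
  have htot : (chi U D hU hD).val.1.length + (chi U D hU hD).val.2.length =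
      (chi M D hM hD).val.1.length + (chi M D hM hD).val.2.length := by
    rw [chi_total, chi_total, hlen]
  refine Or.inr ⟨htot, ?_⟩
  by_cases hUD : DlexLe U D
  · rw [chi_eq_of_dlexLe hU hD hUD]
    by_cases hMD : DlexLe M D
    · rw [chi_eq_of_dlexLe hM hD hMD]
      exact Or.inl hUMd
    · rw [chi_eq_of_dlexLe' hM hD (Or.inl (dlexLt_of_not_dlexLe hMD))]
      rcases hUD with hUD | rfl
      · exact Or.inl hUD
      · exact Or.inr ⟨rfl, dlexLt_of_not_dlexLe hMD⟩
  · have hDU : DlexLt D U := dlexLt_of_not_dlexLe hUD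
    rw [chi_eq_of_dlexLe' hU hD (Or.inl hDU)]
    have hDM : DlexLt D M := dlexLt_trans hDU hUMd
    by_cases hMD : DlexLe M D
    · exact absurd hDM (not_dlexLt_of_dlexLe hMD)
    · rw [chi_eq_of_dlexLe' hM hD (Or.inl (dlexLt_of_not_dlexLe hMD))]
      exact Or.inr ⟨rfl, hUMd⟩

theorem pairLt_irrefl (p : WordPair I) : ¬ PairLt p p := by
  rintro (h | ⟨-, h | ⟨-, h⟩⟩)
  · exact lt_irrefl _ h
  · exact dlexLt_irrefl _ h
  · exact dlexLt_irrefl _ h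

theorem pairLt_trans {p q r : WordPair I} (h1 : PairLt p q) (h2 : PairLt q r) : PairLt p r := by
  rcases h1 with h1 | ⟨e1, h1⟩ <;> rcases h2 with h2 | ⟨e2, h2⟩
  · exact Or.inl (h1.trans h2)
  · exact Or.inl (e2 ▸ h1)
  · exact Or.inl (e1 ▸ h2)
  · refine Or.inr ⟨e1.trans e2, ?_⟩
    rcases h1 with h1 | ⟨e1', h1⟩ <;> rcases h2 with h2 | ⟨e2', h2⟩
    · exact Or.inl (dlexLt_trans h1 h2)
    · exact Or.inl (e2' ▸ h1)
    · exact Or.inl (e1' ▸ h2)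
    · exact Or.inr ⟨e1'.trans e2', dlexLt_trans h1 h2⟩

instance : IsIrrefl (WordPair I) PairLt := ⟨pairLt_irrefl⟩
instance : IsTrans (WordPair I) PairLt := ⟨fun _ _ _ => pairLt_trans⟩
instance : IsStrictOrder (WordPair I) PairLt := ⟨⟩

theorem pairLt_total_le {p q : WordPair I} (h : PairLt p q) :
    p.val.1.length + p.val.2.length ≤ q.val.1.length + q.val.2.length := by
  rcases h with h | ⟨e, -⟩
  · exact le_of_lt h
  · exact le_of_eq e

/-- Lists over a fixed "alphabet list" with bounded length form a finite set. -/
theorem finite_bounded_lists (F : List I) (N : ℕ) :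
    {l : List I | l.length ≤ N ∧ ∀ a ∈ l, a ∈ F}.Finite := by
  classical
  have hFin : Finite {x // x ∈ F} := F.finite_toSet.to_subtype
  have hfin2 : {l : List {x // x ∈ F} | l.length ≤ N}.Finite := List.finite_length_le _ N
  have himg : {l : List I | l.length ≤ N ∧ ∀ a ∈ l, a ∈ F} ⊆
      (fun l : List {x // x ∈ F} => l.map Subtype.val) '' {l | l.length ≤ N} := by
    rintro l ⟨hlen, hmem⟩
    refine ⟨l.attach.map (fun x => (⟨x.1, hmem _ x.2⟩ : {x // x ∈ F})), by simpa using hlen, ?_⟩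
    simp [List.map_map]
  exact Set.Finite.subset (hfin2.image _) himg

theorem finite_pairs (F : List I) (N : ℕ) :
    {q : WordPair I | q.val.1.length + q.val.2.length ≤ N ∧
      (∀ a ∈ q.val.1, a ∈ F) ∧ (∀ a ∈ q.val.2, a ∈ F)}.Finite := by
  classical
  have h1 := finite_bounded_lists F N
  have h2 : ({q : WordPair I | q.val.1.length + q.val.2.length ≤ N ∧
      (∀ a ∈ q.val.1, a ∈ F) ∧ (∀ a ∈ q.val.2, a ∈ F)}) ⊆
      (fun q : WordPair I => q.val) ⁻¹'
        ({l : List I | l.length ≤ N ∧ ∀ a ∈ l, a ∈ F} ×ˢ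
         {l : List I | l.length ≤ N ∧ ∀ a ∈ l, a ∈ F}) := by
    rintro q ⟨hlen, hm1, hm2⟩
    simp only [Set.mem_preimage, Set.mem_prod, Set.mem_setOf_eq]
    exact ⟨⟨by omega, hm1⟩, ⟨by omega, hm2⟩⟩
  refine Set.Finite.subset ?_ h2
  apply Set.Finite.preimage ?_ (h1.prod h1)
  intro a _ b _ h
  exact Subtype.ext h

end PairAux

section KeyLemma

variable {I : Type*} [LinearOrder I] {C : Type*} [CommRing C]

theorem key_lemma
    (Mem : MvPolynomial (WordPair I) C → Prop)
    (hadd : ∀ f g, Mem f → Mem g → Mem (f + g))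
    (hneg : ∀ f, Mem f → Mem (-f))
    (h0 : Mem 0)
    (hmul : ∀ f g, Mem f → Mem g → Mem (f * g))
    (hrel : ∀ V1 V2 V3 : List I, V1 ≠ [] → V2 ≠ [] → V3 ≠ [] → DlexLt V1 V3 →
      Mem (rPoly C V1 V2 V3))
    (hdiv : ∀ (m : ℕ), m ≠ 0 → ∀ f, Mem ((m : ℕ) • f) → Mem f)
    (A B D : List I) (hA : A ≠ []) (hB : B ≠ []) (hD : D ≠ []) (hAD : DlexLt A D)
    (M : List I) (hM : M ∈ shuffles A B) (hmax : ∀ U ∈ shuffles A B, U ≤ M)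
    (hMne : M ≠ [])
    (IH : ∀ q' : WordPair I, PairLt q' (chi M D hMne hD) →
      (∀ a ∈ q'.val.1, a ∈ A ++ B ++ D) → (∀ a ∈ q'.val.2, a ∈ A ++ B ++ D) →
      Mem (MvPolynomial.X q')) :
    Mem (MvPolynomial.X (chi M D hMne hD)) := by
  classical
  have hsub : ∀ f g, Mem f → Mem g → Mem (f - g) := fun f g hf hg => by
    rw [sub_eq_add_neg]; exact hadd _ _ hf (hneg _ hg)
  have hmsum : ∀ s : Multiset (MvPolynomial (WordPair I) C),
      (∀ x ∈ s, Mem x) → Mem s.sum := by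
    intro s
    induction s using Multiset.induction_on with
    | empty => intro _; simpa using h0
    | cons a s ihs =>
      intro h
      rw [Multiset.sum_cons]
      exact hadd _ _ (h a (by simp)) (ihs (fun x hx => h x (by simp [hx])))
  have hfsum : ∀ {ι : Type} (t : Finset ι) (f : ι → MvPolynomial (WordPair I) C),
      (∀ i ∈ t, Mem (f i)) → Mem (∑ i ∈ t, f i) := by
    intro ι t f h
    exact Finset.sum_induction f Mem hadd h0 h
  have hAlen : 0 < A.length := List.length_pos_iff.mpr hA
  have hBlen : 0 < B.length := List.length_pos_iff.mpr hB
  have hDlen : 0 < D.length := List.length_pos_iff.mpr hD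
  have hMlen : M.length = A.length + B.length := length_of_mem_shuffles hM
  have htotq : (chi M D hMne hD).val.1.length + (chi M D hMne hD).val.2.length =
      A.length + B.length + D.length := by
    rw [chi_total, hMlen]
  have hAfst : DlexLt A (chi M D hMne hD).val.1 := by
    rcases chi_val_cases M D hMne hD with h | h <;> rw [h]
    · exact Or.inl (show A.length < M.length by omega)
    · exact hAD
  have memIH : ∀ (Y Z : List I) (hY : Y ≠ []) (hZ : Z ≠ []),
      PairLt (chi Y Z hY hZ) (chi M D hMne hD) →
      (∀ a ∈ Y, a ∈ A ++ B ++ D) → (∀ a ∈ Z, a ∈ A ++ B ++ D) →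
      Mem (MvPolynomial.X (chi Y Z hY hZ)) := by
    intro Y Z hY hZ hplt hmY hmZ
    refine IH _ hplt ?_ ?_
    · rcases chi_val_cases Y Z hY hZ with h | h <;> rw [h]
      · exact hmY
      · exact hmZ
    · rcases chi_val_cases Y Z hY hZ with h | h <;> rw [h]
      · exact hmZ
      · exact hmY
  -- membership of shSumL C A B D
  have hshL : Mem (shSumL C A B D) := by
    rw [shSumL]
    apply hmsum
    intro f hf
    rcases Multiset.mem_map.mp hf with ⟨U, hU, rfl⟩
    have hUne : U ≠ [] := ne_nil_of_mem_shuffles hU hB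
    have hUlen : U.length = B.length + D.length := length_of_mem_shuffles hU
    have hXchi : Xchi C A U = MvPolynomial.X (chi A U hA hUne) := by
      rw [Xchi, dif_pos (⟨hA, hUne⟩ : A ≠ [] ∧ U ≠ [])]
    rw [hXchi]
    apply memIH
    · exact pairLt_chi_left hA hUne _ (by omega) hAfst
    · intro a ha
      simp [List.mem_append]
      tauto
    · intro a ha
      rcases mem_of_mem_shuffles hU ha with h | h <;> simp [List.mem_append] <;> tauto
  -- membership of the "error" sum over non-maximal shuffles
  have hE : Mem ((((shuffles A B).filter (fun U => ¬ U = M)).map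
      (fun U => Xchi C U D)).sum) := by
    apply hmsum
    intro f hf
    rcases Multiset.mem_map.mp hf with ⟨U, hUf, rfl⟩
    rw [Multiset.mem_filter] at hUf
    obtain ⟨hU, hne⟩ := hUf
    have hUne : U ≠ [] := ne_nil_of_mem_shuffles hU hA
    have hUlen : U.length = A.length + B.length := length_of_mem_shuffles hU
    have hUM : U < M := lt_of_le_of_ne (hmax U hU) hne
    have hXchi : Xchi C U D = MvPolynomial.X (chi U D hUne hD) := by
      rw [Xchi, dif_pos (⟨hUne, hD⟩ : U ≠ [] ∧ D ≠ [])]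
    rw [hXchi]
    apply memIH
    · exact pairLt_chi_right hUne hMne hD (by omega) hUM
    · intro a ha
      rcases mem_of_mem_shuffles hU ha with h | h <;> simp [List.mem_append] <;> tauto
    · intro a ha
      simp [List.mem_append]
      tauto
  -- membership of the correction double sum
  have hcorr : Mem (∑ j ∈ Finset.range B.length,
      ((∑ i ∈ Finset.Ico (1 - j) A.length,
          Xchi C (A.drop i) (B.drop j) * shSumR C (A.take i) (B.take j) D)
        - ∑ k ∈ Finset.Ico (1 - j) D.length,
          shSumL C A (B.take j) (D.take k) * Xchi C (B.drop j) (D.drop k))) := by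
    apply hfsum
    intro j hj
    rw [Finset.mem_range] at hj
    apply hsub
    · apply hfsum
      intro i hi
      rw [Finset.mem_Ico] at hi
      obtain ⟨hi1, hi2⟩ := hi
      have hij1 : 1 ≤ i + j := by omega
      have hdAne : A.drop i ≠ [] := by
        intro h
        have := List.drop_eq_nil_iff.mp h
        omega
      have hdBne : B.drop j ≠ [] := by
        intro h
        have := List.drop_eq_nil_iff.mp h
        omega
      apply hmul
      · have hXchi : Xchi C (A.drop i) (B.drop j) =
            MvPolynomial.X (chi (A.drop i) (B.drop j) hdAne hdBne) := by
          rw [Xchi, dif_pos (⟨hdAne, hdBne⟩ : A.drop i ≠ [] ∧ B.drop j ≠ [])]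
        rw [hXchi]
        apply memIH
        · apply pairLt_of_total_lt
          rw [chi_total, htotq]
          simp only [List.length_drop]
          omega
        · intro a ha
          have := List.drop_subset i A ha
          simp [List.mem_append]; tauto
        · intro a ha
          have := List.drop_subset j B ha
          simp [List.mem_append]; tauto
      · rw [shSumR]
        apply hmsum
        intro f hf
        rcases Multiset.mem_map.mp hf with ⟨U, hU, rfl⟩
        have hUlen : U.length = i + j := by
          have h1 := length_of_mem_shuffles hU
          rw [List.length_take, List.length_take] at h1
          omega
        have hUne : U ≠ [] := by
          intro h
          rw [h] at hUlen
          simp at hUlen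
          omega
        have hXchi : Xchi C U D = MvPolynomial.X (chi U D hUne hD) := by
          rw [Xchi, dif_pos (⟨hUne, hD⟩ : U ≠ [] ∧ D ≠ [])]
        rw [hXchi]
        apply memIH
        · apply pairLt_of_total_lt
          rw [chi_total, htotq]
          omega
        · intro a ha
          rcases mem_of_mem_shuffles hU ha with h | h
          · have := List.take_subset i A h
            simp [List.mem_append]; tauto
          · have := List.take_subset j B h
            simp [List.mem_append]; tauto
        · intro a ha
          simp [List.mem_append]; tauto
    · apply hfsum
      intro k hk
      rw [Finset.mem_Ico] at hk
      obtain ⟨hk1, hk2⟩ := hk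
      have hjk1 : 1 ≤ j + k := by omega
      apply hmul
      · rw [shSumL]
        apply hmsum
        intro f hf
        rcases Multiset.mem_map.mp hf with ⟨U, hU, rfl⟩
        have hUlen : U.length = j + k := by
          have h1 := length_of_mem_shuffles hU
          rw [List.length_take, List.length_take] at h1
          omega
        have hUne : U ≠ [] := by
          intro h
          rw [h] at hUlen
          simp at hUlen
          omega
        have hXchi : Xchi C A U = MvPolynomial.X (chi A U hA hUne) := by
          rw [Xchi, dif_pos (⟨hA, hUne⟩ : A ≠ [] ∧ U ≠ [])]
        rw [hXchi]
        apply memIH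
        · apply pairLt_of_total_lt
          rw [chi_total, htotq]
          omega
        · intro a ha
          simp [List.mem_append]; tauto
        · intro a ha
          rcases mem_of_mem_shuffles hU ha with h | h
          · have := List.take_subset j B h
            simp [List.mem_append]; tauto
          · have := List.take_subset k D h
            simp [List.mem_append]; tauto
      · have hdBne : B.drop j ≠ [] := by
          intro h
          have := List.drop_eq_nil_iff.mp h
          omega
        have hdDne : D.drop k ≠ [] := by
          intro h
          have := List.drop_eq_nil_iff.mp h
          omega
        have hXchi : Xchi C (B.drop j) (D.drop k) =
            MvPolynomial.X (chi (B.drop j) (D.drop k) hdBne hdDne) := by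
          rw [Xchi, dif_pos (⟨hdBne, hdDne⟩ : B.drop j ≠ [] ∧ D.drop k ≠ [])]
        rw [hXchi]
        apply memIH
        · apply pairLt_of_total_lt
          rw [chi_total, htotq]
          simp only [List.length_drop]
          omega
        · intro a ha
          have := List.drop_subset j B ha
          simp [List.mem_append]; tauto
        · intro a ha
          have := List.drop_subset k D ha
          simp [List.mem_append]; tauto
  -- split shSumR into the leading term and the error sum
  have hsplit : shSumR C A B D =
      ((shuffles A B).count M : ℕ) • MvPolynomial.X (chi M D hMne hD) +
      (((shuffles A B).filter (fun U => ¬ U = M)).map (fun U => Xchi C U D)).sum := by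
    rw [shSumR]
    conv_lhs => rw [← Multiset.filter_add_not (fun U => U = M) (shuffles A B)]
    rw [Multiset.map_add, Multiset.sum_add]
    congr 1
    rw [Multiset.filter_eq', Multiset.map_replicate, Multiset.sum_replicate]
    congr 1
    rw [Xchi, dif_pos (⟨hMne, hD⟩ : M ≠ [] ∧ D ≠ [])]
  have hcount : (shuffles A B).count M ≠ 0 := by
    have := Multiset.count_pos.mpr hM
    omega
  apply hdiv _ hcount
  have hkey : ((shuffles A B).count M : ℕ) • MvPolynomial.X (chi M D hMne hD) =
      rPoly C A B D + shSumL C A B D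
      - (∑ j ∈ Finset.range B.length,
          ((∑ i ∈ Finset.Ico (1 - j) A.length,
              Xchi C (A.drop i) (B.drop j) * shSumR C (A.take i) (B.take j) D)
            - ∑ k ∈ Finset.Ico (1 - j) D.length,
              shSumL C A (B.take j) (D.take k) * Xchi C (B.drop j) (D.drop k)))
      - (((shuffles A B).filter (fun U => ¬ U = M)).map (fun U => Xchi C U D)).sum := by
    rw [rPoly, hsplit]
    abel
  rw [hkey]
  exact hsub _ _ (hsub _ _ (hadd _ _ (hrel A B D hA hB hD hAD) hshL) hcorr) hE

end KeyLemma

/-- Let `J` be the ideal of `MvPolynomial (WordPair I) C` generated by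
the relations `r(V1,V2,V3)` for nonempty words `V1, V2, V3` with `V1 <dlex V3`, and let
`Sgood` be the set of pairs `(V, W)` such that `V` is a Lyndon word and `W` is not the
lexicographically greatest shuffle of two nonempty words `W1, W2` with `W1 <dlex V`.
Then every polynomial `f` decomposes as `f = g + h` with `g` in the `C`-subalgebra
generated by the variables `X p`, `p ∈ Sgood`, and `h ∈ J`; i.e. the quotient algebra is
generated by the images of these variables. -/
theorem stmt_12 {I : Type*} [LinearOrder I] (C : Type*) [CommRing C] [Algebra ℚ C]
    [Nontrivial C]
    (J : Ideal (MvPolynomial (WordPair I) C))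
    (hJ : J = Ideal.span {r : MvPolynomial (WordPair I) C |
      ∃ V1 V2 V3 : List I, V1 ≠ [] ∧ V2 ≠ [] ∧ V3 ≠ [] ∧ DlexLt V1 V3 ∧
        r = rPoly C V1 V2 V3})
    (Sgood : Set (WordPair I))
    (hSgood : Sgood = {p : WordPair I | IsLyndonWord p.val.1 ∧
      ¬ ∃ W1 W2 : List I, W1 ≠ [] ∧ W2 ≠ [] ∧ DlexLt W1 p.val.1 ∧
        p.val.2 ∈ shuffles W1 W2 ∧ ∀ U ∈ shuffles W1 W2, U ≤ p.val.2}) :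
    ∀ f : MvPolynomial (WordPair I) C,
      ∃ g h : MvPolynomial (WordPair I) C,
        g ∈ Algebra.adjoin C (MvPolynomial.X '' Sgood) ∧ h ∈ J ∧ f = g + h := by
  classical
  set Aalg := Algebra.adjoin C ((MvPolynomial.X '' Sgood : Set (MvPolynomial (WordPair I) C))) with hAalg
  let Mem : MvPolynomial (WordPair I) C → Prop := fun f =>
    ∃ g h : MvPolynomial (WordPair I) C, g ∈ Aalg ∧ h ∈ J ∧ f = g + h
  have hadd : ∀ f g, Mem f → Mem g → Mem (f + g) := by
    rintro f g ⟨g1, h1, hg1, hh1, rfl⟩ ⟨g2, h2, hg2, hh2, rfl⟩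
    exact ⟨g1 + g2, h1 + h2, add_mem hg1 hg2, add_mem hh1 hh2, by ring⟩
  have hneg : ∀ f, Mem f → Mem (-f) := by
    rintro f ⟨g1, h1, hg1, hh1, rfl⟩
    exact ⟨-g1, -h1, neg_mem hg1, neg_mem hh1, by ring⟩
  have h0 : Mem 0 := ⟨0, 0, zero_mem _, zero_mem _, by ring⟩
  have hmul : ∀ f g, Mem f → Mem g → Mem (f * g) := by
    rintro f g ⟨g1, h1, hg1, hh1, rfl⟩ ⟨g2, h2, hg2, hh2, rfl⟩
    refine ⟨g1 * g2, g1 * h2 + h1 * (g2 + h2), mul_mem hg1 hg2, ?_, by ring⟩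
    exact add_mem (J.mul_mem_left g1 hh2) (J.mul_mem_right (g2 + h2) hh1)
  have hrel : ∀ V1 V2 V3 : List I, V1 ≠ [] → V2 ≠ [] → V3 ≠ [] → DlexLt V1 V3 →
      Mem (rPoly C V1 V2 V3) := by
    intro V1 V2 V3 h1 h2 h3 hlt
    refine ⟨0, rPoly C V1 V2 V3, zero_mem _, ?_, by ring⟩
    rw [hJ]
    exact Ideal.subset_span ⟨V1, V2, V3, h1, h2, h3, hlt, rfl⟩
  have hdiv : ∀ (m : ℕ), m ≠ 0 → ∀ f, Mem ((m : ℕ) • f) → Mem f := by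
    rintro m hm f ⟨g, h, hg, hh, heq⟩
    have hqinv : ((m : ℚ)⁻¹ • ((m : ℕ) • f)) = f := by
      rw [← Nat.cast_smul_eq_nsmul ℚ m f, smul_smul,
        inv_mul_cancel₀ (Nat.cast_ne_zero.mpr hm), one_smul]
    have halg : (algebraMap ℚ (MvPolynomial (WordPair I) C) ((m : ℚ)⁻¹)) ∈ Aalg := by
      rw [IsScalarTower.algebraMap_apply ℚ C (MvPolynomial (WordPair I) C)]
      exact Subalgebra.algebraMap_mem _ _
    refine ⟨(m : ℚ)⁻¹ • g, (m : ℚ)⁻¹ • h, ?_, ?_, ?_⟩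
    · rw [Algebra.smul_def]
      exact mul_mem halg hg
    · rw [Algebra.smul_def]
      exact J.mul_mem_left _ hh
    · rw [← hqinv, heq, smul_add]
  have hX : ∀ q : WordPair I, Mem (MvPolynomial.X q) := by
    intro q0
    have hfin := finite_pairs (q0.val.1 ++ q0.val.2)
      (q0.val.1.length + q0.val.2.length)
    have hwf := hfin.wellFoundedOn (r := PairLt)
    have hq0s : q0 ∈ {q : WordPair I |
        q.val.1.length + q.val.2.length ≤ q0.val.1.length + q0.val.2.length ∧
        (∀ a ∈ q.val.1, a ∈ q0.val.1 ++ q0.val.2) ∧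
        (∀ a ∈ q.val.2, a ∈ q0.val.1 ++ q0.val.2)} := by
      refine ⟨le_rfl, ?_, ?_⟩ <;> intro a ha <;> simp [List.mem_append] <;> tauto
    refine hwf.induction (P := fun q => Mem (MvPolynomial.X q)) hq0s ?_
    intro q hqs IHs
    obtain ⟨hqN, hqF1, hqF2⟩ := hqs
    obtain ⟨hq1, hq2, hq12⟩ := q.property
    by_cases hgood : q ∈ Sgood
    · exact ⟨MvPolynomial.X q, 0, Algebra.subset_adjoin ⟨q, hgood, rfl⟩, J.zero_mem, by ring⟩
    rw [hSgood, Set.mem_setOf_eq] at hgood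
    by_cases hlyn : IsLyndonWord q.val.1
    · -- q.val.2 is the greatest shuffle of W1 W2, use key_lemma with D = q.val.1
      have hex : ∃ W1 W2 : List I, W1 ≠ [] ∧ W2 ≠ [] ∧ DlexLt W1 q.val.1 ∧
          q.val.2 ∈ shuffles W1 W2 ∧ ∀ U ∈ shuffles W1 W2, U ≤ q.val.2 := by
        by_contra hne
        exact hgood ⟨hlyn, hne⟩
      obtain ⟨W1, W2, hW1, hW2, hlt, hmem, hmax⟩ := hex
      have hchi : chi q.val.2 q.val.1 hq2 hq1 = q := by
        refine Subtype.ext ?_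
        rw [chi_eq_of_dlexLe' hq2 hq1 hq12]
      have hWperm : ∀ a, a ∈ W1 ++ W2 → a ∈ q.val.2 := by
        intro a ha
        exact (perm_of_mem_shuffles _ _ _ hmem).mem_iff.mpr ha
      have := key_lemma Mem hadd hneg h0 hmul hrel hdiv W1 W2 q.val.1 hW1 hW2 hq1 hlt
        q.val.2 hmem hmax hq2 ?_
      · rw [hchi] at this
        exact this
      · intro q' hplt hm1 hm2
        rw [hchi] at hplt
        refine IHs q' ⟨?_, ?_, ?_⟩ hplt
        · exact le_trans (pairLt_total_le hplt) hqN
        · intro a ha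
          have h3 := hm1 a ha
          simp only [List.mem_append] at h3
          rcases h3 with (h3 | h3) | h3
          · exact hqF2 a (hWperm a (by simp [h3]))
          · exact hqF2 a (hWperm a (by simp [h3]))
          · exact hqF1 a h3
        · intro a ha
          have h3 := hm2 a ha
          simp only [List.mem_append] at h3
          rcases h3 with (h3 | h3) | h3
          · exact hqF2 a (hWperm a (by simp [h3]))
          · exact hqF2 a (hWperm a (by simp [h3]))
          · exact hqF1 a h3
    · -- q.val.1 is not Lyndon: it is the greatest shuffle of A and U
      obtain ⟨A, U, hA, hU, hVeq, hbound⟩ := exists_max_shuffle_decomp q.val.1 hq1 hlyn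
      have hM : q.val.1 ∈ shuffles A U := by
        rw [hVeq]
        exact append_mem_shuffles A U
      have hAD : DlexLt A q.val.2 := by
        refine Or.inl ?_
        have h1 : q.val.1.length = A.length + U.length := by rw [hVeq]; simp
        have h2 : 0 < U.length := List.length_pos_iff.mpr hU
        have h3 := dlexLe_length hq12
        omega
      have hchi : chi q.val.1 q.val.2 hq1 hq2 = q := by
        refine Subtype.ext ?_
        rw [chi_eq_of_dlexLe hq1 hq2 hq12]
      have hVperm : ∀ a, a ∈ A ++ U → a ∈ q.val.1 := by
        intro a ha
        rw [hVeq]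
        exact ha
      have := key_lemma Mem hadd hneg h0 hmul hrel hdiv A U q.val.2 hA hU hq2 hAD
        q.val.1 hM hbound hq1 ?_
      · rw [hchi] at this
        exact this
      · intro q' hplt hm1 hm2
        rw [hchi] at hplt
        refine IHs q' ⟨?_, ?_, ?_⟩ hplt
        · exact le_trans (pairLt_total_le hplt) hqN
        · intro a ha
          have h3 := hm1 a ha
          simp only [List.mem_append] at h3
          rcases h3 with (h3 | h3) | h3
          · exact hqF1 a (hVperm a (by simp [h3]))
          · exact hqF1 a (hVperm a (by simp [h3]))
          · exact hqF2 a h3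
        · intro a ha
          have h3 := hm2 a ha
          simp only [List.mem_append] at h3
          rcases h3 with (h3 | h3) | h3
          · exact hqF1 a (hVperm a (by simp [h3]))
          · exact hqF1 a (hVperm a (by simp [h3]))
          · exact hqF2 a h3
  intro f
  refine MvPolynomial.induction_on f ?_ (fun p q hp hq => hadd p q hp hq)
    (fun p n hp => hmul _ _ hp (hX n))
  intro a
  refine ⟨MvPolynomial.C a, 0, ?_, J.zero_mem, by ring⟩
  rw [← MvPolynomial.algebraMap_eq]
  exact Subalgebra.algebraMap_mem _ _
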